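/- Let p be a prime and let a ≥ 1 be an integer. Then ρ(ap, p) = ρ(ap+1, p) = ⋯ = ρ(ap + (p−1), p); that is, ρ(ap + i, p) = ρ(ap, p) for all integers 0 ≤ i ≤ p−1. -/

import Mathlib

/-- `rho n m` is the proportion of permutations in `Sym(n)` whose order is coprime to `m`. -/
noncomputable def rho (n m : ℕ) : ℝ :=
  (Finset.univ.filter (fun π : Equiv.Perm (Fin n) => Nat.Coprime (orderOf π) m)).card /
    (Nat.factorial n : ℝ)

section Aux

open Equiv Equiv.Perm Finset

variable {α β : Type*} [Fintype α] [DecidableEq α] [Fintype β] [DecidableEq β]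

/-- count of permutations with order coprime to `p` -/
noncomputable def pcnt (p : ℕ) (α : Type*) [Fintype α] [DecidableEq α] : ℕ :=
  (Finset.univ.filter (fun π : Equiv.Perm α => Nat.Coprime (orderOf π) p)).card

/-- `permCongr` as a `MulEquiv`. -/
def permCongrMul (e : α ≃ β) : Equiv.Perm α ≃* Equiv.Perm β :=
  { Equiv.permCongr e with
    map_mul' := by
      intro f g
      ext y
      simp [Equiv.permCongr_apply] }

lemma pcnt_congr (p : ℕ) (e : α ≃ β) : pcnt p α = pcnt p β := by
  unfold pcnt
  apply Finset.card_nbij' (fun σ => permCongrMul e σ) (fun τ => (permCongrMul e).symm τ)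
  · intro σ hσ
    simp only [Finset.mem_coe, Finset.mem_filter, Finset.mem_univ, true_and] at hσ ⊢
    rwa [show orderOf ((permCongrMul e) σ) = orderOf σ from orderOf_injective (permCongrMul e).toMonoidHom (permCongrMul e).injective σ]
  · intro τ hτ
    simp only [Finset.mem_coe, Finset.mem_filter, Finset.mem_univ, true_and] at hτ ⊢
    rwa [show orderOf ((permCongrMul e).symm τ) = orderOf τ from orderOf_injective (permCongrMul e).symm.toMonoidHom (permCongrMul e).symm.injective τ]
  · intro σ _; simp
  · intro τ _; simp

lemma mem_insert_support_cycleOf_iff (σ : Equiv.Perm α) (x y : α) :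
    y ∈ insert x (σ.cycleOf x).support ↔ σ.SameCycle x y := by
  rw [Finset.mem_insert, Equiv.Perm.mem_support_cycleOf_iff]
  constructor
  · rintro (rfl | ⟨h, -⟩)
    · exact Equiv.Perm.SameCycle.refl _ _
    · exact h
  · intro h
    by_cases hx : x ∈ σ.support
    · exact Or.inr ⟨h, hx⟩
    · left
      obtain ⟨i, hi⟩ := h
      rw [← hi, Equiv.Perm.zpow_apply_eq_self_of_apply_eq_self (Equiv.Perm.notMem_support.mp hx)]

lemma cycleOf_cycleOf (σ : Equiv.Perm α) (x : α) :
    (σ.cycleOf x).cycleOf x = σ.cycleOf x := by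
  by_cases h : σ x = x
  · rw [(Equiv.Perm.cycleOf_eq_one_iff _).mpr h, Equiv.Perm.cycleOf_one]
  · exact (Equiv.Perm.isCycle_cycleOf σ h).cycleOf_eq
      (by rwa [Equiv.Perm.cycleOf_apply_self])

/-- members of the fiber index set are the identity or cycles through `x` -/
lemma eq_one_or_isCycle_of_cycleOf_eq {c : Equiv.Perm α} {x : α} (hc : c.cycleOf x = c) :
    c = 1 ∨ (c.IsCycle ∧ x ∈ c.support) := by
  by_cases h : c x = x
  · exact Or.inl (by rw [← hc, (Equiv.Perm.cycleOf_eq_one_iff _).mpr h])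
  · exact Or.inr ⟨hc ▸ Equiv.Perm.isCycle_cycleOf c h, Equiv.Perm.mem_support.mpr h⟩


variable {α : Type*} [Fintype α] [DecidableEq α]

lemma fiber_card (p : ℕ) (hp : p.Prime) (x : α) (c : Equiv.Perm α) (hc : c.cycleOf x = c) :
    ((Finset.univ.filter (fun σ : Equiv.Perm α => Nat.Coprime (orderOf σ) p)).filter
        (fun σ => σ.cycleOf x = c)).card =
      if ¬ p ∣ (insert x c.support).card then pcnt p {y : α // y ∉ insert x c.support} else 0 := by
  set s : Finset α := insert x c.support with hs
  have hsub : c.support ⊆ s := Finset.subset_insert _ _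
  have hxs : x ∈ s := Finset.mem_insert_self _ _
  by_cases hpl : p ∣ s.card
  · rw [if_neg (not_not_intro hpl)]
    rw [Finset.card_eq_zero, Finset.filter_filter, Finset.filter_eq_empty_iff]
    rintro σ - ⟨h1, h2⟩
    have hc1 : c ≠ 1 := by
      rintro rfl
      have hcard1 : s.card = 1 := by simp [hs]
      rw [hcard1, Nat.dvd_one] at hpl
      exact hp.ne_one hpl
    obtain hcy := (eq_one_or_isCycle_of_cycleOf_eq hc).resolve_left hc1
    have hscard : s.card = c.support.card := by rw [hs, Finset.insert_eq_self.mpr hcy.2]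
    have hσx : σ x ≠ x := fun h =>
      hc1 (by rw [← h2, (Equiv.Perm.cycleOf_eq_one_iff _).mpr h])
    have hmem : c ∈ σ.cycleFactorsFinset := by
      rw [← h2]
      exact Equiv.Perm.cycleOf_mem_cycleFactorsFinset_iff.mpr (Equiv.Perm.mem_support.mpr hσx)
    have hdvd : c.support.card ∣ orderOf σ := by
      rw [← Equiv.Perm.lcm_cycleType]
      apply Multiset.dvd_lcm
      rw [Equiv.Perm.cycleType_def]
      exact Multiset.mem_map_of_mem _ (Finset.mem_val.mpr hmem)
    have hpord : p ∣ orderOf σ := (hscard ▸ hpl).trans hdvd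
    have h3 : p ∣ Nat.gcd (orderOf σ) p := Nat.dvd_gcd hpord dvd_rfl
    rw [Nat.Coprime.gcd_eq_one h1] at h3
    exact hp.ne_one (Nat.dvd_one.mp h3)
  · rw [if_pos hpl]
    unfold pcnt
    have hSC : ∀ σ : Equiv.Perm α, σ.cycleOf x = c → ∀ y, (y ∈ s ↔ σ.SameCycle x y) := by
      intro σ hσ y; rw [hs, ← hσ, mem_insert_support_cycleOf_iff]
    have hinv : ∀ (σ : Equiv.Perm α), σ.cycleOf x = c → ∀ y, y ∉ s ↔ σ y ∉ s := by
      intro σ hσ y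
      apply not_congr
      rw [hSC σ hσ, hSC σ hσ, Equiv.Perm.sameCycle_apply_right]
    have hfix : ∀ (τ : Equiv.Perm {y : α // y ∉ s}) (y : α), y ∈ s →
        Equiv.Perm.ofSubtype τ y = y := fun τ y hy =>
      Equiv.Perm.ofSubtype_apply_of_not_mem τ (not_not_intro hy)
    have hdisj : ∀ τ : Equiv.Perm {y : α // y ∉ s}, Equiv.Perm.Disjoint c (Equiv.Perm.ofSubtype τ) := by
      intro τ y
      by_cases hy : y ∈ s
      · exact Or.inr (hfix τ y hy)
      · exact Or.inl (Equiv.Perm.notMem_support.mp fun hmem => hy (hsub hmem))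
    refine Finset.card_bij'
      (fun σ hσ => σ.subtypePerm (fun y => (hinv σ (Finset.mem_filter.mp hσ).2 y).symm))
      (fun τ _ => c * Equiv.Perm.ofSubtype τ) ?_ ?_ ?_ ?_
    · intro σ hσ
      obtain ⟨hσ1, hσ2⟩ := Finset.mem_filter.mp hσ
      have hσ1' : Nat.Coprime (orderOf σ) p := (Finset.mem_filter.mp hσ1).2
      simp only [Finset.mem_filter, Finset.mem_univ, true_and]
      have hdvd : orderOf (σ.subtypePerm (p := fun y => y ∉ s) (fun y => (hinv σ hσ2 y).symm)) ∣ orderOf σ := by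
        apply orderOf_dvd_of_pow_eq_one
        rw [Equiv.Perm.subtypePerm_pow]
        ext y
        simp [pow_orderOf_eq_one]
      exact Nat.Coprime.coprime_dvd_left hdvd hσ1'
    · intro τ hτ
      have hτ' : Nat.Coprime (orderOf τ) p := (Finset.mem_filter.mp hτ).2
      have hcyc : (c * Equiv.Perm.ofSubtype τ).cycleOf x = c := by
        rcases eq_one_or_isCycle_of_cycleOf_eq hc with h1 | ⟨hcy, hxc⟩
        · rw [h1, one_mul, Equiv.Perm.cycleOf_eq_one_iff]
          exact hfix τ x hxs
        · rw [Equiv.Perm.cycleOf_mul_of_apply_right_eq_self (hdisj τ).commute x (hfix τ x hxs), hc]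
      have hoc : Nat.Coprime (orderOf c) p := by
        rcases eq_one_or_isCycle_of_cycleOf_eq hc with h1 | ⟨hcy, hxc⟩
        · simp [h1]
        · rw [hcy.orderOf]
          have hss : c.support.card = s.card := by rw [hs, Finset.insert_eq_self.mpr hxc]
          rw [hss]
          exact (hp.coprime_iff_not_dvd.mpr hpl).symm
      have hinj : Function.Injective
          (Equiv.Perm.ofSubtype : Equiv.Perm {y : α // y ∉ s} →* Equiv.Perm α) := by
        intro a b hab
        ext y
        have h := DFunLike.congr_fun hab (y : α)
        rw [Equiv.Perm.ofSubtype_apply_coe, Equiv.Perm.ofSubtype_apply_coe] at h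
        exact h
      have hot : orderOf (Equiv.Perm.ofSubtype τ) = orderOf τ :=
        orderOf_injective Equiv.Perm.ofSubtype hinj τ
      have hcop : Nat.Coprime (orderOf (c * Equiv.Perm.ofSubtype τ)) p := by
        rw [(hdisj τ).orderOf, hot]
        exact Nat.Coprime.coprime_dvd_left (Nat.lcm_dvd_mul _ _) (hoc.mul hτ')
      simp only [Finset.mem_filter, Finset.mem_univ, true_and]
      exact ⟨hcop, hcyc⟩
    · intro σ hσ
      have hσ2 : σ.cycleOf x = c := (Finset.mem_filter.mp hσ).2
      ext y
      rw [Equiv.Perm.mul_apply]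
      by_cases hy : y ∈ s
      · rw [Equiv.Perm.ofSubtype_apply_of_not_mem
            (σ.subtypePerm (fun y => (hinv σ (Finset.mem_filter.mp hσ).2 y).symm)) (not_not_intro hy), ← hσ2]
        exact Equiv.Perm.SameCycle.cycleOf_apply ((hSC σ hσ2 y).mp hy)
      · rw [Equiv.Perm.ofSubtype_apply_of_mem
            (σ.subtypePerm (fun y => (hinv σ (Finset.mem_filter.mp hσ).2 y).symm)) hy,
          Equiv.Perm.subtypePerm_apply]
        have hns : σ y ∉ s := (hinv σ hσ2 y).mp hy
        exact Equiv.Perm.notMem_support.mp fun h => hns (hsub h)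
    · intro τ hτ
      ext y
      have h1 : Equiv.Perm.ofSubtype τ ↑y = ↑(τ y) := Equiv.Perm.ofSubtype_apply_coe τ y
      have h2 : c ↑(τ y) = ↑(τ y) :=
        Equiv.Perm.notMem_support.mp fun h => (τ y).2 (hsub h)
      simp [Equiv.Perm.subtypePerm_apply, Equiv.Perm.mul_apply, h1, h2]


lemma eq_one_or_isCycle_of_cycleOf_eq' {c : Equiv.Perm α} {x : α} (hc : c.cycleOf x = c) :
    c = 1 ∨ (c.IsCycle ∧ x ∈ c.support) := by
  by_cases h : c x = x
  · exact Or.inl (by rw [← hc, (Equiv.Perm.cycleOf_eq_one_iff _).mpr h])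
  · exact Or.inr ⟨hc ▸ Equiv.Perm.isCycle_cycleOf c h, Equiv.Perm.mem_support.mpr h⟩

lemma aux_facts {c : Equiv.Perm α} {x : α} {ℓ : ℕ} (hc : c.cycleOf x = c)
    (hL : (insert x c.support).card = ℓ + 1) (hℓ : 1 ≤ ℓ) :
    c.IsCycle ∧ x ∈ c.support ∧ orderOf c = ℓ + 1 := by
  have hc1 : c ≠ 1 := by
    rintro rfl
    have hcard1 : (insert x (1 : Equiv.Perm α).support).card = 1 := by simp
    omega
  obtain ⟨hcy, hxc⟩ := (eq_one_or_isCycle_of_cycleOf_eq' hc).resolve_left hc1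
  refine ⟨hcy, hxc, ?_⟩
  rw [hcy.orderOf]
  rwa [Finset.insert_eq_self.mpr hxc] at hL

lemma aux_pow_inj {c : Equiv.Perm α} {x : α} {ℓ : ℕ} (hcy : c.IsCycle)
    (hxc : x ∈ c.support) (horder : orderOf c = ℓ + 1) :
    ∀ j k, j ≤ ℓ → k ≤ ℓ → (c ^ j) x = (c ^ k) x → j = k := by
  have key : ∀ j k, j ≤ k → k ≤ ℓ → (c ^ j) x = (c ^ k) x → j = k := by
    intro j k hjk hk h
    by_contra hne
    have h1 : 1 ≤ k - j := by omega
    have hy : (c ^ (k - j)) ((c ^ j) x) = (c ^ j) x := by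
      rw [← Equiv.Perm.mul_apply, ← pow_add, Nat.sub_add_cancel hjk]
      exact h.symm
    have hyy : c ((c ^ j) x) ≠ (c ^ j) x :=
      Equiv.Perm.mem_support.mp (Equiv.Perm.pow_apply_mem_support.mpr hxc)
    have hone : c ^ (k - j) = 1 := (hcy.pow_eq_one_iff' hyy).mpr hy
    have hdvd := orderOf_dvd_of_pow_eq_one hone
    rw [horder] at hdvd
    have := Nat.le_of_dvd (by omega) hdvd
    omega
  intro j k hj hk h
  rcases le_total j k with hjk | hjk
  · exact key j k hjk hk h
  · exact (key k j hjk hj h.symm).symm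

lemma aux_pow_ne {c : Equiv.Perm α} {x : α} {ℓ : ℕ} (hcy : c.IsCycle)
    (hxc : x ∈ c.support) (horder : orderOf c = ℓ + 1) :
    ∀ k, 1 ≤ k → k ≤ ℓ → (c ^ k) x ≠ x := by
  intro k h1 h2 h
  have := aux_pow_inj hcy hxc horder k 0 h2 (Nat.zero_le _) (by simpa using h)
  omega

/-- the list `[x, c x, c² x, …]` of length `ℓ+1` -/
def cycList (c : Equiv.Perm α) (x : α) (ℓ : ℕ) : List α :=
  x :: List.ofFn fun i : Fin ℓ => (c ^ ((i : ℕ) + 1)) x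

lemma cycList_length (c : Equiv.Perm α) (x : α) (ℓ : ℕ) :
    (cycList c x ℓ).length = ℓ + 1 := by simp [cycList]

lemma cycList_getElem (c : Equiv.Perm α) (x : α) (ℓ : ℕ) (k : ℕ)
    (hk : k < (cycList c x ℓ).length) : (cycList c x ℓ)[k] = (c ^ k) x := by
  have hk' : k < ℓ + 1 := by rwa [cycList_length] at hk
  match k with
  | 0 => simp [cycList]
  | (k + 1) =>
    show (x :: List.ofFn fun i : Fin ℓ => (c ^ ((i : ℕ) + 1)) x)[k + 1]'(by simpa [cycList] using hk) = _
    rw [List.getElem_cons_succ, List.getElem_ofFn]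

lemma cycList_nodup {c : Equiv.Perm α} {x : α} {ℓ : ℕ} (hcy : c.IsCycle)
    (hxc : x ∈ c.support) (horder : orderOf c = ℓ + 1) :
    (cycList c x ℓ).Nodup := by
  rw [cycList, List.nodup_cons]
  constructor
  · intro hx
    rw [List.mem_ofFn] at hx
    obtain ⟨i, hi⟩ := hx
    exact aux_pow_ne hcy hxc horder _ (by omega) (by omega) hi
  · rw [List.nodup_ofFn]
    intro i j hij
    have := aux_pow_inj hcy hxc horder ((i : ℕ) + 1) ((j : ℕ) + 1)
      (by omega) (by omega) hij
    exact Fin.ext (by omega)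

/-- the list `[x, e 0, e 1, …]` -/
def embList (x : α) {ℓ : ℕ} (e : Fin ℓ ↪ {y : α // y ≠ x}) : List α :=
  x :: List.ofFn fun i : Fin ℓ => ((e i : α))

lemma embList_length (x : α) {ℓ : ℕ} (e : Fin ℓ ↪ {y : α // y ≠ x}) :
    (embList x e).length = ℓ + 1 := by simp [embList]

lemma embList_nodup (x : α) {ℓ : ℕ} (e : Fin ℓ ↪ {y : α // y ≠ x}) :
    (embList x e).Nodup := by
  rw [embList, List.nodup_cons]
  constructor
  · intro hx
    rw [List.mem_ofFn] at hx
    obtain ⟨i, hi⟩ := hx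
    exact (e i).2 hi
  · rw [List.nodup_ofFn]
    intro i j hij
    exact e.injective (Subtype.ext hij)

lemma embList_getElem (x : α) {ℓ : ℕ} (e : Fin ℓ ↪ {y : α // y ≠ x}) (k : ℕ)
    (hk : k < ℓ) : (embList x e)[k + 1]'(by rw [embList_length]; omega) = (e ⟨k, hk⟩ : α) := by
  show (x :: List.ofFn fun i : Fin ℓ => ((e i : α)))[k + 1]'(by simp; omega) = _
  rw [List.getElem_cons_succ, List.getElem_ofFn]

lemma getElem_idx_congr {β : Type*} {l : List β} {i j : ℕ} (h : i = j) (hi : i < l.length) :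
    l[i]'hi = l[j]'(h ▸ hi) := by subst h; rfl

lemma cycle_count (x : α) (ℓ : ℕ) :
    ((Finset.univ.filter (fun c : Equiv.Perm α => c.cycleOf x = c)).filter
        (fun c => (insert x c.support).card = ℓ + 1)).card
      = (Fintype.card α - 1).descFactorial ℓ := by
  have hrhs : (Fintype.card α - 1).descFactorial ℓ
      = (Finset.univ : Finset (Fin ℓ ↪ {y : α // y ≠ x})).card := by
    rw [Finset.card_univ, Fintype.card_embedding_eq, Fintype.card_fin]
    congr 1
    rw [show (Fintype.card {y : α // y ≠ x}) = Fintype.card {y : α // ¬ (y = x)} from rfl,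
      Fintype.card_subtype_compl, Fintype.card_subtype_eq]
  rw [hrhs]
  refine Finset.card_bij'
    (fun c hcmem =>
      ⟨fun i => ⟨(c ^ ((i : ℕ) + 1)) x, by
        obtain ⟨hmem1, hL⟩ := Finset.mem_filter.mp hcmem
        have hc : c.cycleOf x = c := (Finset.mem_filter.mp hmem1).2
        obtain ⟨hcy, hxc, horder⟩ := aux_facts hc hL i.pos
        exact aux_pow_ne hcy hxc horder _ (by omega) (by omega)⟩, by
        intro i j hij
        obtain ⟨hmem1, hL⟩ := Finset.mem_filter.mp hcmem
        have hc : c.cycleOf x = c := (Finset.mem_filter.mp hmem1).2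
        obtain ⟨hcy, hxc, horder⟩ := aux_facts hc hL i.pos
        have := aux_pow_inj hcy hxc horder ((i : ℕ) + 1) ((j : ℕ) + 1)
          (by omega) (by omega) (by simpa [Subtype.ext_iff] using hij)
        exact Fin.ext (by omega)⟩)
    (fun e hemem => (embList x e).formPerm)
    ?_ ?_ ?_ ?_
  · intro c hcmem
    exact Finset.mem_univ _
  · -- membership of the backward map
    intro e hemem
    have hnd := embList_nodup x e
    have hlen := embList_length x e
    rcases Nat.eq_zero_or_pos ℓ with hℓ0 | hℓ1
    · subst hℓ0
      have hx1 : embList x e = [x] := by simp [embList]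
      show (embList x e).formPerm ∈ _
      rw [hx1, List.formPerm_singleton]
      simp only [Finset.mem_filter, Finset.mem_univ, true_and]
      exact ⟨by rw [Equiv.Perm.cycleOf_one], by simp⟩
    · have h2 : 2 ≤ (embList x e).length := by omega
      have hcy : (embList x e).formPerm.IsCycle := List.isCycle_formPerm hnd h2
      have hsupp : (embList x e).formPerm.support = (embList x e).toFinset := by
        apply List.support_formPerm_of_nodup _ hnd
        intro y hy
        have : (embList x e).length = 1 := by rw [hy]; simp
        omega
      have hxsupp : x ∈ (embList x e).formPerm.support := by
        rw [hsupp, List.mem_toFinset, embList]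
        exact List.mem_cons_self
      show (embList x e).formPerm ∈ _
      simp only [Finset.mem_filter, Finset.mem_univ, true_and]
      constructor
      · exact hcy.cycleOf_eq (Equiv.Perm.mem_support.mp hxsupp)
      · rw [Finset.insert_eq_self.mpr hxsupp, hsupp,
          List.toFinset_card_of_nodup hnd, hlen]
  · -- left inverse : bwd (fwd c) = c
    intro c hcmem
    obtain ⟨hmem1, hL⟩ := Finset.mem_filter.mp hcmem
    have hc : c.cycleOf x = c := (Finset.mem_filter.mp hmem1).2
    show (cycList c x ℓ).formPerm = c
    rcases Nat.eq_zero_or_pos ℓ with hℓ0 | hℓ1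
    · subst hℓ0
      have hc1 : c = 1 := by
        rcases eq_one_or_isCycle_of_cycleOf_eq' hc with h | ⟨hcy, hxc⟩
        · exact h
        · exfalso
          have h2 := hcy.two_le_card_support
          rw [Finset.insert_eq_self.mpr hxc] at hL
          omega
      have hx1 : cycList c x 0 = [x] := by simp [cycList]
      rw [hx1, List.formPerm_singleton, hc1]
    · obtain ⟨hcy, hxc, horder⟩ := aux_facts hc hL hℓ1
      have hnd := cycList_nodup hcy hxc horder
      have hlen := cycList_length c x ℓ
      ext y
      by_cases hy : y ∈ (cycList c x ℓ).toFinset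
      · rw [List.mem_toFinset] at hy
        obtain ⟨k, hk, rfl⟩ := List.mem_iff_getElem.mp hy
        rw [List.formPerm_apply_getElem _ hnd k hk, cycList_getElem c x ℓ k hk,
          cycList_getElem c x ℓ ((k + 1) % (cycList c x ℓ).length)
            (Nat.mod_lt _ (by rw [hlen]; omega))]
        rw [hlen, ← horder, pow_mod_orderOf]
        rw [← Equiv.Perm.mul_apply, ← pow_succ']
      · have h1 : (cycList c x ℓ).formPerm y = y := by
          by_contra h
          exact hy (Finset.mem_coe.mp (List.support_formPerm_le' _ h))
        have h2 : c y = y := by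
          by_contra h
          have hsc : c.SameCycle x y := hcy.sameCycle (Equiv.Perm.mem_support.mp hxc) h
          obtain ⟨i, hi, hix⟩ := hsc.exists_pow_eq'
          apply hy
          rw [List.mem_toFinset, ← hix,
            ← cycList_getElem c x ℓ i (by rw [hlen, ← horder]; exact hi)]
          exact List.getElem_mem _
        rw [h1, h2]
  · -- right inverse : fwd (bwd e) = e
    intro e hemem
    ext i
    have hnd := embList_nodup x e
    have hlen := embList_length x e
    show ((embList x e).formPerm ^ ((i : ℕ) + 1)) x = (e i : α)
    rw [show ((embList x e).formPerm ^ ((i : ℕ) + 1)) x =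
        (embList x e)[(((i : ℕ) + 1) % (embList x e).length)]'(Nat.mod_lt _ (by rw [hlen]; omega)) from
      List.formPerm_pow_apply_head x _ hnd _]
    have hmod : ((i : ℕ) + 1) % (embList x e).length = (i : ℕ) + 1 := by
      rw [hlen]; exact Nat.mod_eq_of_lt (by omega)
    rw [getElem_idx_congr hmod, embList_getElem x e (i : ℕ) i.isLt]


lemma pcnt_rec (p : ℕ) (hp : p.Prime) (n : ℕ) :
    pcnt p (Fin (n+1)) = ∑ ℓ ∈ Finset.range (n+1),
      if ¬ p ∣ (ℓ+1) then n.descFactorial ℓ * pcnt p (Fin (n-ℓ)) else 0 := by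
  classical
  set x : Fin (n+1) := 0 with hx
  set K : Finset (Equiv.Perm (Fin (n+1))) :=
    Finset.univ.filter (fun c : Equiv.Perm (Fin (n+1)) => c.cycleOf x = c) with hK
  have h1 : pcnt p (Fin (n+1)) =
      ∑ c ∈ K,
        ((Finset.univ.filter
            (fun σ : Equiv.Perm (Fin (n+1)) => Nat.Coprime (orderOf σ) p)).filter
          (fun σ => σ.cycleOf x = c)).card := by
    unfold pcnt
    apply Finset.card_eq_sum_card_fiberwise
    intro σ hσ
    simp only [hK, Finset.mem_coe, Finset.mem_filter, Finset.mem_univ, true_and]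
    exact cycleOf_cycleOf σ x
  -- convert each fiber
  have h2 : ∀ c ∈ K,
      ((Finset.univ.filter
          (fun σ : Equiv.Perm (Fin (n+1)) => Nat.Coprime (orderOf σ) p)).filter
        (fun σ => σ.cycleOf x = c)).card =
      (if ¬ p ∣ (insert x c.support).card then
        pcnt p (Fin (n + 1 - (insert x c.support).card)) else 0) := by
    intro c hc
    have hcc : c.cycleOf x = c := by
      rw [hK] at hc
      exact (Finset.mem_filter.mp hc).2
    rw [fiber_card p hp x c hcc]
    congr 1
    apply pcnt_congr
    apply Fintype.equivFinOfCardEq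
    rw [show Fintype.card {y : Fin (n+1) // y ∉ insert x c.support}
        = Fintype.card (Fin (n+1)) - Fintype.card {y : Fin (n+1) // y ∈ insert x c.support} from
      Fintype.card_subtype_compl _]
    rw [Fintype.card_fin]
    congr 1
    exact Fintype.card_coe _
  rw [h1, Finset.sum_congr rfl h2]
  -- group by cycle length
  have hmaps : ∀ c ∈ K, (insert x c.support).card - 1 ∈ Finset.range (n+1) := by
    intro c hc
    have h := Finset.card_le_univ (insert x c.support)
    rw [Fintype.card_fin] at h
    rw [Finset.mem_range]
    omega
  rw [← Finset.sum_fiberwise_of_maps_to hmaps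
    (fun c => (if ¬ p ∣ (insert x c.support).card then
        pcnt p (Fin (n + 1 - (insert x c.support).card)) else 0))]
  apply Finset.sum_congr rfl
  intro ℓ hℓ
  have hfil : K.filter (fun c => (insert x c.support).card - 1 = ℓ)
      = K.filter (fun c => (insert x c.support).card = ℓ + 1) := by
    apply Finset.filter_congr
    intro c hc
    have h1 : 1 ≤ (insert x c.support).card :=
      Finset.card_pos.mpr ⟨x, Finset.mem_insert_self _ _⟩
    constructor <;> intro h <;> omega
  rw [hfil]
  have hterm : ∀ c ∈ K.filter (fun c => (insert x c.support).card = ℓ + 1),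
      (if ¬ p ∣ (insert x c.support).card then
        pcnt p (Fin (n + 1 - (insert x c.support).card)) else 0)
      = (if ¬ p ∣ (ℓ + 1) then pcnt p (Fin (n - ℓ)) else 0) := by
    intro c hc
    have h := (Finset.mem_filter.mp hc).2
    rw [h, Nat.succ_sub_succ]
  rw [Finset.sum_congr rfl hterm, Finset.sum_const]
  rw [show (K.filter (fun c => (insert x c.support).card = ℓ + 1)).card
      = n.descFactorial ℓ from by
    have := cycle_count (α := Fin (n+1)) x ℓ
    rw [Fintype.card_fin] at this
    simpa [hK] using this]
  rw [smul_eq_mul, mul_ite, mul_zero]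


lemma rho_eq (p n : ℕ) : rho n p = (pcnt p (Fin n) : ℝ) / (Nat.factorial n : ℝ) := rfl

lemma rho_rec (p : ℕ) (hp : p.Prime) (n : ℕ) :
    ((n : ℝ) + 1) * rho (n+1) p = ∑ ℓ ∈ Finset.range (n+1),
      if ¬ p ∣ (ℓ+1) then rho (n-ℓ) p else 0 := by
  have hterm : ∀ ℓ ∈ Finset.range (n+1),
      (if ¬ p ∣ (ℓ+1) then rho (n-ℓ) p else 0)
        = (if ¬ p ∣ (ℓ+1) then ((n.descFactorial ℓ * pcnt p (Fin (n-ℓ)) : ℕ) : ℝ) else 0)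
            / (n.factorial : ℝ) := by
    intro ℓ hℓ
    have hln : ℓ ≤ n := Nat.lt_succ_iff.mp (Finset.mem_range.mp hℓ)
    by_cases h : ¬ p ∣ (ℓ+1)
    · rw [if_pos h, if_pos h, rho_eq]
      have hfact : ((n - ℓ).factorial : ℝ) * (n.descFactorial ℓ : ℝ) = (n.factorial : ℝ) := by
        exact_mod_cast congrArg (Nat.cast : ℕ → ℝ) (Nat.factorial_mul_descFactorial hln)
      rw [div_eq_div_iff (by positivity) (by positivity)]
      push_cast
      nlinarith [hfact]
    · simp [h]
  rw [Finset.sum_congr rfl hterm, ← Finset.sum_div]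
  have hX : ((pcnt p (Fin (n+1)) : ℕ) : ℝ)
      = ∑ ℓ ∈ Finset.range (n+1),
          (if ¬ p ∣ (ℓ+1) then ((n.descFactorial ℓ * pcnt p (Fin (n-ℓ)) : ℕ) : ℝ) else 0) := by
    rw [pcnt_rec p hp n]
    push_cast [apply_ite (Nat.cast : ℕ → ℝ)]
    rfl
  rw [← hX, rho_eq, Nat.factorial_succ]
  have h1 : (n.factorial : ℝ) ≠ 0 := by positivity
  field_simp
  push_cast
  ring
lemma pairing (p : ℕ) (hp : p.Prime) (m : ℕ) (F : ℕ → ℝ)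
    (hstep : ∀ k, k < m → ¬ p ∣ (k+1) → F (k+1) = F k)
    (hnd : ¬ p ∣ (m+2)) :
    ∑ ℓ ∈ Finset.range (m+1), (if ¬ p ∣ (ℓ+2) then F (m-ℓ) else 0)
      = ∑ ℓ ∈ Finset.range (m+1), (if ¬ p ∣ (ℓ+1) then F (m-ℓ) else 0) := by
  have hsplit : ∀ (c : ℕ → Prop) (inst : DecidablePred c),
      (∑ ℓ ∈ Finset.range (m+1), if ¬ c ℓ then F (m-ℓ) else 0)
      + (∑ ℓ ∈ Finset.range (m+1), if c ℓ then F (m-ℓ) else 0)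
      = ∑ ℓ ∈ Finset.range (m+1), F (m-ℓ) := by
    intro c inst
    rw [← Finset.sum_add_distrib]
    apply Finset.sum_congr rfl
    intro ℓ _
    by_cases h : c ℓ <;> simp [h]
  have hs1 := hsplit (fun ℓ => p ∣ (ℓ+2)) inferInstance
  have hs2 := hsplit (fun ℓ => p ∣ (ℓ+1)) inferInstance
  beta_reduce at hs1 hs2
  have hC : (∑ ℓ ∈ Finset.range (m+1), if p ∣ (ℓ+2) then F (m-ℓ) else 0)
      = ∑ ℓ ∈ Finset.range (m+1), if p ∣ (ℓ+1) then F (m-ℓ) else 0 := by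
    rw [← Finset.sum_filter, ← Finset.sum_filter]
    refine Finset.sum_nbij' (fun ℓ => ℓ + 1) (fun ℓ => ℓ - 1) ?_ ?_ ?_ ?_ ?_
    · intro ℓ hℓ
      simp only [Finset.mem_filter, Finset.mem_range] at hℓ ⊢
      obtain ⟨hr, hd⟩ := hℓ
      have hlm : ℓ ≠ m := by
        intro he
        apply hnd
        rw [show m + 2 = ℓ + 2 from by omega]
        exact hd
      refine ⟨by omega, ?_⟩
      rw [show ℓ + 1 + 1 = ℓ + 2 from by omega]
      exact hd
    · intro ℓ hℓ
      simp only [Finset.mem_filter, Finset.mem_range] at hℓ ⊢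
      obtain ⟨hr, hd⟩ := hℓ
      have hℓ1 : 1 ≤ ℓ := by
        by_contra h
        have hz : ℓ = 0 := by omega
        subst hz
        exact hp.ne_one (Nat.dvd_one.mp (by simpa using hd))
      refine ⟨by omega, ?_⟩
      rw [show ℓ - 1 + 2 = ℓ + 1 from by omega]
      exact hd
    · intro ℓ hℓ
      show ℓ + 1 - 1 = ℓ
      omega
    · intro ℓ hℓ
      simp only [Finset.mem_filter, Finset.mem_range] at hℓ
      obtain ⟨hr, hd⟩ := hℓ
      have hℓ1 : 1 ≤ ℓ := by
        by_contra h
        have hz : ℓ = 0 := by omega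
        subst hz
        exact hp.ne_one (Nat.dvd_one.mp (by simpa using hd))
      show ℓ - 1 + 1 = ℓ
      omega
    · intro ℓ hℓ
      simp only [Finset.mem_filter, Finset.mem_range] at hℓ
      obtain ⟨hr, hd⟩ := hℓ
      show F (m - ℓ) = F (m - (ℓ + 1))
      have hlm : ℓ ≠ m := by
        intro he
        apply hnd
        rw [show m + 2 = ℓ + 2 from by omega]
        exact hd
      have hnd2 : ¬ p ∣ (m - ℓ) := by
        intro hdd
        apply hnd
        have hsum : (m - ℓ) + (ℓ + 2) = m + 2 := by omega
        have hdd2 := Nat.dvd_add hdd hd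
        rw [hsum] at hdd2
        exact hdd2
      have heq : m - ℓ = (m - (ℓ+1)) + 1 := by omega
      rw [heq]
      exact hstep (m - (ℓ+1)) (by omega) (by rw [← heq]; exact hnd2)
  linarith [hs1, hs2, hC]

set_option maxHeartbeats 1000000 in
lemma rho_step (p : ℕ) (hp : p.Prime) : ∀ n : ℕ, ¬ p ∣ (n+1) → rho (n+1) p = rho n p := by
  intro n
  induction n using Nat.strong_induction_on with
  | _ n IH =>
    intro hnd
    match n, IH with
    | 0, _ =>
      have h := rho_rec p hp 0
      simp only [Finset.sum_range_one, Nat.cast_zero, zero_add, one_mul] at h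
      rw [h]
      have : ¬ p ∣ 1 := fun hd => hp.ne_one (Nat.dvd_one.mp hd)
      simp [this]
    | (m+1), IH =>
      have h1 := rho_rec p hp (m+1)
      have h2 := rho_rec p hp m
      rw [Finset.sum_range_succ'] at h1
      have hzero : (if ¬ p ∣ (0+1) then rho (m+1-0) p else 0) = rho (m+1) p := by
        have : ¬ p ∣ 1 := fun hd => hp.ne_one (Nat.dvd_one.mp hd)
        simp [this]
      rw [hzero] at h1
      have hshift : ∀ ℓ ∈ Finset.range (m+1),
          (if ¬ p ∣ (ℓ+1+1) then rho (m+1-(ℓ+1)) p else 0)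
            = (if ¬ p ∣ (ℓ+2) then rho (m-ℓ) p else 0) := by
        intro ℓ _
        rw [Nat.succ_sub_succ]
      rw [Finset.sum_congr rfl hshift] at h1
      -- the key pairing step
      have h4 := pairing p hp m (fun k => rho k p)
        (fun k hk hcond => IH k (by omega) hcond)
        (by rw [show m + 2 = m + 1 + 1 from by omega]; exact hnd)
      rw [h4, ← h2] at h1
      -- h1 : (↑(m+1)+1) * rho (m+2) p = (↑m+1) * rho (m+1) p + rho (m+1) p
      have hne : ((m : ℝ) + 1 + 1) ≠ 0 := by positivity
      apply mul_left_cancel₀ hne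
      calc ((m : ℝ) + 1 + 1) * rho (m + 1 + 1) p
          = ((m : ℝ) + 1) * rho (m+1) p + rho (m+1) p := by exact_mod_cast h1
        _ = ((m : ℝ) + 1 + 1) * rho (m+1) p := by ring


end Aux

theorem stmt_12 (p : ℕ) (hp : p.Prime) (a : ℕ) (ha : 1 ≤ a) :
    ∀ i : ℕ, i ≤ p - 1 → rho (a * p + i) p = rho (a * p) p := by
  intro i
  induction i with
  | zero => intro _; rfl
  | succ k IHk =>
    intro hi
    have hk : k ≤ p - 1 := by omega
    have hp2 := hp.two_le
    have h2 : ¬ p ∣ (a * p + k + 1) := by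
      intro hdvd
      have hpk : p ∣ (k + 1) :=
        (Nat.dvd_add_right (dvd_mul_left p a)).mp (by rwa [add_assoc] at hdvd)
      have := Nat.le_of_dvd (by omega) hpk
      omega
    rw [show a * p + (k + 1) = (a * p + k) + 1 from by omega]
    rw [rho_step p hp (a * p + k) h2]
    exact IHk hk
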